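/- Let ρ be a σ-finite measure on (0,∞) with ∫₀^∞ y^{α+ε} ρ(dy) < ∞ for some α, ε > 0, and let ν be a σ-finite measure on (0,∞) with ν(x,∞) ≤ 2x^{-α} for all x > 0 and ν ⊛ ρ(x,∞) regularly varying of index -α. Fix b > 1 with ν(b,∞) ≤ 1 and define the probability measure μ(B) = ν(B ∩ (b,∞)) + (1 − ν(b,∞)) 1_B(1). Then μ ⊛ ρ(x,∞) ~ ν ⊛ ρ(x,∞) as x → ∞; in particular μ ⊛ ρ has regularly varying tail of index -α, and μ(y,∞) = ν(y,∞) for y > b. -/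

import Mathlib

open MeasureTheory Filter Real Topology Set
open scoped ENNReal

/-- Product convolution of two measures on `(0,∞)` (as measures on `ℝ`):
the pushforward of the product measure under multiplication. -/
noncomputable def prodConv (ν ρ : MeasureTheory.Measure ℝ) : MeasureTheory.Measure ℝ :=
  (ν.prod ρ).map (fun p : ℝ × ℝ => p.1 * p.2)


lemma two_pow_le_of_le_logb (y : ℝ) (hy : 0 < y) (n : ℕ) (h : (n:ℝ) ≤ Real.logb 2 y) :
    (2:ℝ)^n ≤ y := by
  have : (2:ℝ)^(n:ℝ) ≤ y := by
    rw [← Real.rpow_logb (b := 2) (by norm_num) (by norm_num) hy]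
    exact (Real.rpow_le_rpow_left_iff (by norm_num)).mpr h
  rwa [Real.rpow_natCast] at this

lemma lt_two_pow_of_logb_lt (y : ℝ) (hy : 0 < y) (n : ℕ) (h : Real.logb 2 y < (n:ℝ)) :
    y < (2:ℝ)^n := by
  have : y < (2:ℝ)^(n:ℝ) := by
    rw [← Real.rpow_logb (b := 2) (by norm_num) (by norm_num) hy]
    exact (Real.rpow_lt_rpow_left_iff (by norm_num)).mpr h
  rwa [Real.rpow_natCast] at this

lemma growth_lemma (F : ℝ → ℝ) (q K : ℝ) (hq : 1 < q) (hK : 0 < K) (x₁ : ℝ) (hx₁ : 1 ≤ x₁)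
    (hpos : 0 < F x₁)
    (hstep : ∀ x, x₁ ≤ x → q * F x ≤ F (2 * x))
    (hloc : ∀ x y, x₁ ≤ x → x ≤ y → y ≤ 2 * x → K * F x ≤ F y) :
    Tendsto F atTop atTop := by
  have hx₁0 : 0 < x₁ := by linarith
  have hgeo : ∀ n : ℕ, q ^ n * F x₁ ≤ F (2 ^ n * x₁) := by
    intro n
    induction n with
    | zero => simp
    | succ n ih =>
      have h1 : x₁ ≤ 2 ^ n * x₁ := le_mul_of_one_le_left hx₁0.le (one_le_pow₀ (by norm_num))
      have := hstep _ h1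
      have hqpos : 0 ≤ q := by linarith
      calc q ^ (n+1) * F x₁ = q * (q ^ n * F x₁) := by ring
        _ ≤ q * F (2 ^ n * x₁) := by nlinarith [pow_nonneg hqpos n]
        _ ≤ F (2 * (2 ^ n * x₁)) := hstep _ h1
        _ = F (2 ^ (n+1) * x₁) := by ring_nf
  rw [tendsto_atTop]
  intro M
  have htd : Tendsto (fun n : ℕ => K * (q ^ n * F x₁)) atTop atTop := by
    apply Tendsto.const_mul_atTop hK
    exact (tendsto_pow_atTop_atTop_of_one_lt hq).atTop_mul_const hpos
  obtain ⟨N, hN⟩ := (htd.eventually_ge_atTop M).exists_forall_of_atTop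
  filter_upwards [eventually_ge_atTop ((2:ℝ) ^ N * x₁)] with x hx
  have hxpos : 0 < x := lt_of_lt_of_le (by positivity) hx
  set n : ℕ := ⌊Real.logb 2 (x / x₁)⌋₊ with hn
  have hxx₁ : 1 ≤ x / x₁ := by
    rw [le_div_iff₀ hx₁0]
    calc 1 * x₁ = x₁ := one_mul x₁
      _ ≤ 2 ^ N * x₁ := le_mul_of_one_le_left hx₁0.le (one_le_pow₀ (by norm_num))
      _ ≤ x := hx
  have hlogb0 : 0 ≤ Real.logb 2 (x / x₁) := Real.logb_nonneg (by norm_num) hxx₁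
  have hlow : (2:ℝ)^n * x₁ ≤ x := by
    have := two_pow_le_of_le_logb (x/x₁) (by linarith) n (Nat.floor_le hlogb0)
    calc (2:ℝ)^n * x₁ ≤ (x/x₁) * x₁ := by nlinarith
      _ = x := div_mul_cancel₀ x (ne_of_gt hx₁0)
  have h2 : x < (2:ℝ)^(n+1) * x₁ := by
    have := lt_two_pow_of_logb_lt (x/x₁) (by linarith) (n+1) (by
      push_cast; exact Nat.lt_floor_add_one _)
    calc x = (x / x₁) * x₁ := (div_mul_cancel₀ x (ne_of_gt hx₁0)).symm
      _ < (2:ℝ)^(n+1) * x₁ := by nlinarith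
  have hhigh : x ≤ 2 * ((2:ℝ)^n * x₁) := by
    calc x ≤ (2:ℝ)^(n+1) * x₁ := h2.le
      _ = 2 * ((2:ℝ)^n * x₁) := by ring
  have hnN : N ≤ n := by
    by_contra hc
    push_neg at hc
    have h3 : (2:ℝ)^(n+1) ≤ 2^N := pow_le_pow_right₀ (by norm_num) hc
    have h4 : (2:ℝ)^(n+1) * x₁ ≤ 2^N * x₁ := mul_le_mul_of_nonneg_right h3 hx₁0.le
    linarith
  have h1 : x₁ ≤ 2 ^ n * x₁ := le_mul_of_one_le_left hx₁0.le (one_le_pow₀ (by norm_num))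
  have hKF := hloc (2^n * x₁) x h1 hlow hhigh
  have hmono : K * (q ^ N * F x₁) ≤ K * (q ^ n * F x₁) := by
    have h5 : q ^ N ≤ q ^ n := pow_le_pow_right₀ hq.le hnN
    exact mul_le_mul_of_nonneg_left (mul_le_mul_of_nonneg_right h5 hpos.le) hK.le
  calc M ≤ K * (q ^ N * F x₁) := hN N le_rfl
    _ ≤ K * (q ^ n * F x₁) := hmono
    _ ≤ K * F (2 ^ n * x₁) := by nlinarith [hgeo n]
    _ ≤ F x := hKF


lemma measurable_mul2 : Measurable (fun p : ℝ × ℝ => p.1 * p.2) :=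
  measurable_fst.mul measurable_snd

lemma smul_prod' (c : ℝ≥0∞) (ψ ρ : Measure ℝ) [SFinite ψ] [SFinite ρ] :
    (c • ψ).prod ρ = c • (ψ.prod ρ) := by
  ext s hs
  rw [Measure.prod_apply hs, Measure.smul_apply, Measure.prod_apply hs,
    lintegral_smul_measure]

lemma prodConv_add_left (ψ φ ρ : Measure ℝ) [SFinite ψ] [SFinite φ] [SFinite ρ] :
    prodConv (ψ + φ) ρ = prodConv ψ ρ + prodConv φ ρ := by
  rw [prodConv, Measure.add_prod, Measure.map_add _ _ measurable_mul2]; rfl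

lemma prodConv_smul_left (c : ℝ≥0∞) (ψ ρ : Measure ℝ) [SFinite ψ] [SFinite ρ] :
    prodConv (c • ψ) ρ = c • prodConv ψ ρ := by
  rw [prodConv, smul_prod', Measure.map_smul]; rfl

lemma prodConv_dirac_one (ρ : Measure ℝ) [SFinite ρ] :
    prodConv (Measure.dirac 1) ρ = ρ := by
  rw [prodConv, Measure.dirac_prod, Measure.map_map measurable_mul2 measurable_prodMk_left]
  have h : ((fun p : ℝ × ℝ => p.1 * p.2) ∘ Prod.mk (1:ℝ)) = id := by
    funext v; simp
  rw [h, Measure.map_id]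

lemma prodConv_tail (ψ ρ : Measure ℝ) [SFinite ψ] [SFinite ρ] (x : ℝ) :
    prodConv ψ ρ (Ioi x) = ∫⁻ v, ψ {u | x < u * v} ∂ρ := by
  rw [prodConv, Measure.map_apply measurable_mul2 measurableSet_Ioi,
    Measure.prod_apply_symm (measurable_mul2 measurableSet_Ioi)]
  rfl

lemma markov_bound (ρ : Measure ℝ) (s : ℝ) (hs : 0 < s) (x : ℝ) (hx : 0 < x) :
    ρ (Ioi x) ≤ (∫⁻ y in Ioi (0:ℝ), ENNReal.ofReal (y ^ s) ∂ρ) * ENNReal.ofReal (x ^ (-s)) := by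
  set M := ∫⁻ y in Ioi (0:ℝ), ENNReal.ofReal (y ^ s) ∂ρ with hM
  have hxs : 0 < x ^ s := Real.rpow_pos_of_pos hx s
  have key : ENNReal.ofReal (x ^ s) * ρ (Ioi x) ≤ M := by
    calc ENNReal.ofReal (x ^ s) * ρ (Ioi x) = ∫⁻ _ in Ioi x, ENNReal.ofReal (x ^ s) ∂ρ := by
          rw [setLIntegral_const]
      _ ≤ ∫⁻ y in Ioi x, ENNReal.ofReal (y ^ s) ∂ρ := by
          apply setLIntegral_mono (by measurability)
          intro y hy
          exact ENNReal.ofReal_le_ofReal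
            (Real.rpow_le_rpow hx.le (le_of_lt hy) hs.le)
      _ ≤ M := lintegral_mono' (Measure.restrict_mono (Ioi_subset_Ioi hx.le) le_rfl) le_rfl
  have h2 : ρ (Ioi x) ≤ M / ENNReal.ofReal (x ^ s) := by
    rw [ENNReal.le_div_iff_mul_le (Or.inl (by simp [hxs])) (Or.inl ENNReal.ofReal_ne_top)]
    calc ρ (Ioi x) * ENNReal.ofReal (x ^ s) = ENNReal.ofReal (x ^ s) * ρ (Ioi x) := mul_comm _ _
      _ ≤ M := key
  calc ρ (Ioi x) ≤ M / ENNReal.ofReal (x ^ s) := h2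
    _ = M * ENNReal.ofReal (x ^ (-s)) := by
        rw [div_eq_mul_inv, Real.rpow_neg hx.le, ENNReal.ofReal_inv_of_pos hxs]

lemma trunc_tail_bound (ρ ν : Measure ℝ) [SigmaFinite ρ] [SigmaFinite ν]
    (hρsupp : ρ (Iio 0 ∪ {0}) = 0)
    (α ε : ℝ) (hα : 0 < α) (hε : 0 < ε)
    (hνbd : ∀ x > (0:ℝ), ν (Ioi x) ≤ ENNReal.ofReal (2 * x ^ (-α)))
    (b : ℝ) (hb : 1 < b) (x : ℝ) (hx : b ≤ x) :
    prodConv (ν.restrict (Ioi b)ᶜ) ρ (Ioi x) ≤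
      ENNReal.ofReal (2 * x ^ (-α) * (x/b) ^ (-ε)) *
        (∫⁻ y in Ioi (0:ℝ), ENNReal.ofReal (y ^ (α+ε)) ∂ρ) := by
  have hb0 : (0:ℝ) < b := lt_trans one_pos hb
  have hx0 : (0:ℝ) < x := lt_of_lt_of_le hb0 hx
  have hxb1 : (1:ℝ) ≤ x / b := (one_le_div hb0).mpr hx
  have haev : ∀ᵐ v ∂ρ, 0 < v := by
    rw [ae_iff]
    convert hρsupp using 2
    ext v
    simp only [mem_setOf_eq, not_lt, mem_union, mem_Iio, mem_singleton_iff]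
    exact ⟨fun h => h.lt_or_eq, fun h => h.elim le_of_lt le_of_eq⟩
  rw [prodConv_tail]
  calc ∫⁻ v, (ν.restrict (Ioi b)ᶜ) {u | x < u * v} ∂ρ
      ≤ ∫⁻ v, (Ioi (x/b)).indicator (fun v => ENNReal.ofReal (2 * x^(-α) * v^α)) v ∂ρ := by
        apply lintegral_mono_ae
        filter_upwards [haev] with v hv
        have hset : {u : ℝ | x < u * v} = Ioi (x/v) := by
          ext u; simp [div_lt_iff₀ hv]
        rw [hset, Measure.restrict_apply measurableSet_Ioi]
        by_cases hcase : x / b < v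
        · rw [Set.indicator_apply, if_pos (show v ∈ Ioi (x/b) from hcase)]
          calc ν (Ioi (x/v) ∩ (Ioi b)ᶜ) ≤ ν (Ioi (x/v)) := measure_mono inter_subset_left
            _ ≤ ENNReal.ofReal (2 * (x/v) ^ (-α)) := hνbd _ (div_pos hx0 hv)
            _ = ENNReal.ofReal (2 * x^(-α) * v^α) := by
                congr 1
                rw [div_rpow hx0.le hv.le, Real.rpow_neg hv.le]
                have : v ^ α ≠ 0 := ne_of_gt (Real.rpow_pos_of_pos hv α)
                field_simp
        · rw [Set.indicator_apply, if_neg (show v ∉ Ioi (x/b) from hcase)]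
          push_neg at hcase
          have h1 : v * b ≤ x := (le_div_iff₀ hb0).mp hcase
          have hsub : Ioi (x/v) ⊆ Ioi b := by
            intro u hu
            have h2 : b ≤ x / v := by
              rw [le_div_iff₀ hv]; nlinarith
            exact lt_of_le_of_lt h2 hu
          have hempty : Ioi (x/v) ∩ (Ioi b)ᶜ = ∅ := by
            rw [eq_empty_iff_forall_notMem]; intro u hu; exact hu.2 (hsub hu.1)
          rw [hempty]
          simp
    _ = ∫⁻ v in Ioi (x/b), ENNReal.ofReal (2 * x^(-α) * v^α) ∂ρ :=
        lintegral_indicator measurableSet_Ioi _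
    _ ≤ ∫⁻ v in Ioi (x/b),
          ENNReal.ofReal (2 * x^(-α) * (x/b)^(-ε)) * ENNReal.ofReal (v^(α+ε)) ∂ρ := by
        apply setLIntegral_mono (by measurability)
        intro v hv
        have hv0 : (0:ℝ) < v := lt_of_lt_of_le (lt_of_lt_of_le one_pos hxb1) hv.le
        rw [← ENNReal.ofReal_mul (by positivity)]
        apply ENNReal.ofReal_le_ofReal
        have h1 : v ^ α = v ^ (α + ε) * v ^ (-ε) := by
          rw [← Real.rpow_add hv0]; ring_nf
        have h2 : v ^ (-ε) ≤ (x/b) ^ (-ε) :=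
          Real.rpow_le_rpow_of_nonpos (by linarith) (le_of_lt hv) (by linarith)
        have hv2 : (0:ℝ) ≤ v^(α+ε) := Real.rpow_nonneg hv0.le _
        have h3 : (0:ℝ) ≤ 2 * x^(-α) := by positivity
        calc 2 * x^(-α) * v^α = 2 * x^(-α) * (v^(α+ε) * v^(-ε)) := by rw [h1]
          _ ≤ 2 * x^(-α) * (v^(α+ε) * (x/b)^(-ε)) := by nlinarith [mul_le_mul_of_nonneg_left h2 (mul_nonneg h3 hv2)]
          _ = 2 * x^(-α) * (x/b)^(-ε) * v^(α+ε) := by ring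
    _ = ENNReal.ofReal (2 * x^(-α) * (x/b)^(-ε)) *
          ∫⁻ v in Ioi (x/b), ENNReal.ofReal (v^(α+ε)) ∂ρ :=
        lintegral_const_mul'' _ (by measurability : Measurable fun v : ℝ => ENNReal.ofReal (v^(α+ε))).aemeasurable
    _ ≤ ENNReal.ofReal (2 * x^(-α) * (x/b)^(-ε)) *
          ∫⁻ y in Ioi (0:ℝ), ENNReal.ofReal (y ^ (α+ε)) ∂ρ := by
        apply mul_le_mul_right
        exact lintegral_mono' (Measure.restrict_mono (Ioi_subset_Ioi (by positivity)) le_rfl) le_rfl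


/-- replacing the σ-finite measure `ν` by the probability measure `μ`
obtained by truncating `ν` to `(b,∞)` and putting the remaining mass at `1` does not
change the asymptotics of the product convolution tail. -/
theorem stmt_17 (ρ ν : Measure ℝ) [SigmaFinite ρ] [SigmaFinite ν]
    (hρsupp : ρ (Iio 0 ∪ {0}) = 0) (hνsupp : ν (Iio 0 ∪ {0}) = 0)
    (α ε : ℝ) (hα : 0 < α) (hε : 0 < ε)
    (hmom : ∫⁻ y in Ioi (0:ℝ), ENNReal.ofReal (y ^ (α + ε)) ∂ρ ≠ ⊤)
    -- tail bound on ν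
    (hνbd : ∀ x > (0:ℝ), ν (Ioi x) ≤ ENNReal.ofReal (2 * x ^ (-α)))
    -- ν ⊛ ρ regularly varying of index -α
    (hrv : ∀ t > (0:ℝ),
      Tendsto (fun x => ((prodConv ν ρ) (Ioi (t * x))).toReal /
        ((prodConv ν ρ) (Ioi x)).toReal) atTop (𝓝 (t ^ (-α))))
    (b : ℝ) (hb : 1 < b) (hbν : ν (Ioi b) ≤ 1)
    (μ : Measure ℝ)
    (hμ : μ = ν.restrict (Ioi b) + (1 - ν (Ioi b)) • Measure.dirac 1) :
    Tendsto (fun x => ((prodConv μ ρ) (Ioi x)).toReal /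
        ((prodConv ν ρ) (Ioi x)).toReal) atTop (𝓝 1) ∧
    (∀ t > (0:ℝ),
      Tendsto (fun x => ((prodConv μ ρ) (Ioi (t * x))).toReal /
        ((prodConv μ ρ) (Ioi x)).toReal) atTop (𝓝 (t ^ (-α)))) ∧
    (∀ y > b, μ (Ioi y) = ν (Ioi y)) := by
  subst hμ
  have hb0 : (0:ℝ) < b := lt_trans one_pos hb
  set c : ℝ≥0∞ := 1 - ν (Ioi b) with hc
  have hc1 : c ≤ 1 := tsub_le_self
  set M := ∫⁻ y in Ioi (0:ℝ), ENNReal.ofReal (y ^ (α + ε)) ∂ρ with hM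
  set Mr := M.toReal with hMr
  set s := α + ε with hs
  have hs0 : 0 < s := by simp [hs]; linarith
  set g : ℝ → ℝ≥0∞ := fun x => prodConv ν ρ (Ioi x) with hg
  set G : ℝ → ℝ := fun x => (g x).toReal with hG
  set ga : ℝ → ℝ≥0∞ := fun x => prodConv (ν.restrict (Ioi b)) ρ (Ioi x) with hga
  set gB : ℝ → ℝ≥0∞ := fun x => prodConv (ν.restrict (Ioi b)ᶜ) ρ (Ioi x) with hgB
  set gμ : ℝ → ℝ≥0∞ :=
    fun x => prodConv (ν.restrict (Ioi b) + c • Measure.dirac 1) ρ (Ioi x) with hgμ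
  set Gμ : ℝ → ℝ := fun x => (gμ x).toReal with hGμ
  -- decompositions
  have hdec : ∀ x, g x = ga x + gB x := by
    intro x
    have hν : ν.restrict (Ioi b) + ν.restrict (Ioi b)ᶜ = ν :=
      Measure.restrict_add_restrict_compl measurableSet_Ioi
    rw [hg]
    conv_lhs => rw [← hν]
    rw [prodConv_add_left]
    rfl
  have hdecμ : ∀ x, gμ x = ga x + c * ρ (Ioi x) := by
    intro x
    rw [hgμ]
    simp only [prodConv_add_left, prodConv_smul_left, prodConv_dirac_one]
    rfl
  -- third bullet
  have hthird : ∀ y > b, (ν.restrict (Ioi b) + c • Measure.dirac (1:ℝ)) (Ioi y) = ν (Ioi y) := by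
    intro y hy
    rw [Measure.add_apply, Measure.restrict_apply measurableSet_Ioi,
      inter_eq_left.mpr (Ioi_subset_Ioi hy.le), Measure.smul_apply,
      Measure.dirac_apply' _ measurableSet_Ioi]
    have : (1:ℝ) ∉ Ioi y := by simp; linarith
    rw [indicator_of_notMem this]
    simp
  -- eventual positivity / finiteness of g
  have hevg : ∀ᶠ x in atTop, g x ≠ ⊤ ∧ 0 < G x := by
    have h1 : Tendsto (fun x => G x / G x) atTop (𝓝 1) := by
      have := hrv 1 one_pos
      simp only [one_mul, Real.one_rpow] at this
      exact this
    have := h1.eventually (eventually_gt_nhds (by norm_num : (1:ℝ)/2 < 1))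
    filter_upwards [this] with x hx
    have hGne : G x ≠ 0 := by
      intro h0
      rw [h0] at hx
      norm_num at hx
    have hgtop : g x ≠ ⊤ := by
      intro htop
      apply hGne
      rw [hG]; simp [htop]
    exact ⟨hgtop, lt_of_le_of_ne ENNReal.toReal_nonneg (Ne.symm hGne)⟩
  -- difference bound
  have hCnn : 0 ≤ Mr * (1 + 2 * b ^ ε) := by
    have : (0:ℝ) < b ^ ε := Real.rpow_pos_of_pos hb0 ε
    have : (0:ℝ) ≤ Mr := ENNReal.toReal_nonneg
    nlinarith [Real.rpow_pos_of_pos hb0 ε]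
  have hdiff : ∀ᶠ x in atTop, |Gμ x - G x| ≤ (Mr * (1 + 2 * b ^ ε)) * x ^ (-s) := by
    filter_upwards [hevg, eventually_ge_atTop b] with x hx hxb
    obtain ⟨hgtop, hGpos⟩ := hx
    have hx0 : (0:ℝ) < x := lt_of_lt_of_le hb0 hxb
    have hρx : ρ (Ioi x) ≤ M * ENNReal.ofReal (x ^ (-s)) := markov_bound ρ s hs0 x hx0
    have hρtop : M * ENNReal.ofReal (x ^ (-s)) ≠ ⊤ := ENNReal.mul_ne_top hmom ENNReal.ofReal_ne_top
    have hgafin : ga x ≠ ⊤ := by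
      intro h; apply hgtop; rw [hdec x, h]; simp
    have hgBfin : gB x ≠ ⊤ := by
      intro h; apply hgtop; rw [hdec x, h]; simp
    have hcρfin : c * ρ (Ioi x) ≠ ⊤ :=
      ENNReal.mul_ne_top (by intro h; rw [h] at hc1; simp at hc1)
        (ne_top_of_le_ne_top hρtop hρx)
    have hGeq : G x = (ga x).toReal + (gB x).toReal := by
      rw [hG]; simp only []; rw [hdec x, ENNReal.toReal_add hgafin hgBfin]
    have hGμeq : Gμ x = (ga x).toReal + (c * ρ (Ioi x)).toReal := by
      rw [hGμ]; simp only []; rw [hdecμ x, ENNReal.toReal_add hgafin hcρfin]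
    -- bound (c * ρ (Ioi x)).toReal
    have hbnd1 : (c * ρ (Ioi x)).toReal ≤ Mr * x ^ (-s) := by
      have hle : c * ρ (Ioi x) ≤ M * ENNReal.ofReal (x ^ (-s)) := by
        calc c * ρ (Ioi x) ≤ 1 * ρ (Ioi x) := mul_le_mul_left hc1 _
          _ = ρ (Ioi x) := one_mul _
          _ ≤ M * ENNReal.ofReal (x ^ (-s)) := hρx
      calc (c * ρ (Ioi x)).toReal ≤ (M * ENNReal.ofReal (x ^ (-s))).toReal :=
            ENNReal.toReal_mono hρtop hle
        _ = Mr * x ^ (-s) := by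
            rw [ENNReal.toReal_mul, ENNReal.toReal_ofReal (Real.rpow_nonneg hx0.le _)]
    -- bound (gB x).toReal
    have hbnd2 : (gB x).toReal ≤ 2 * b ^ ε * (Mr * x ^ (-s)) := by
      have hle := trunc_tail_bound ρ ν hρsupp α ε hα hε hνbd b hb x hxb
      have e1 : (x/b) ^ (-ε) = x ^ (-ε) * (b:ℝ) ^ ε := by
        rw [div_rpow hx0.le hb0.le, Real.rpow_neg hb0.le, div_eq_mul_inv, inv_inv]
      have hident : 2 * x ^ (-α) * (x/b) ^ (-ε) = 2 * b ^ ε * x ^ (-s) := by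
        have e2 : x ^ (-α) * x ^ (-ε) = x ^ (-s) := by
          rw [← Real.rpow_add hx0]; congr 1; rw [hs]; ring
        calc 2 * x ^ (-α) * (x/b) ^ (-ε) = 2 * b ^ ε * (x ^ (-α) * x ^ (-ε)) := by
              rw [e1]; ring
          _ = 2 * b ^ ε * x ^ (-s) := by rw [e2]
      have hrtop : ENNReal.ofReal (2 * x ^ (-α) * (x/b) ^ (-ε)) * M ≠ ⊤ :=
        ENNReal.mul_ne_top ENNReal.ofReal_ne_top hmom
      calc (gB x).toReal ≤ (ENNReal.ofReal (2 * x ^ (-α) * (x/b) ^ (-ε)) * M).toReal :=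
            ENNReal.toReal_mono hrtop hle
        _ = (2 * x ^ (-α) * (x/b) ^ (-ε)) * Mr := by
            rw [ENNReal.toReal_mul, ENNReal.toReal_ofReal (by positivity)]
        _ = 2 * b ^ ε * (Mr * x ^ (-s)) := by rw [hident]; ring
    have hMrnn : (0:ℝ) ≤ Mr := ENNReal.toReal_nonneg
    have hxsnn : (0:ℝ) ≤ x ^ (-s) := Real.rpow_nonneg hx0.le _
    have hMxs : (0:ℝ) ≤ Mr * x ^ (-s) := mul_nonneg hMrnn hxsnn
    have hsum : (Mr * (1 + 2 * b ^ ε)) * x ^ (-s)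
        = Mr * x ^ (-s) + 2 * b ^ ε * (Mr * x ^ (-s)) := by ring
    have h1nn : (0:ℝ) ≤ (c * ρ (Ioi x)).toReal := ENNReal.toReal_nonneg
    have h2nn : (0:ℝ) ≤ (gB x).toReal := ENNReal.toReal_nonneg
    rw [hGμeq, hGeq, abs_le]
    constructor <;> [linarith; linarith]
  -- growth of x^s * G x
  have h2e : (1:ℝ) < (2:ℝ) ^ ε := Real.one_lt_rpow_iff_of_pos (by norm_num) |>.mpr (Or.inl ⟨by norm_num, hε⟩)
  set q : ℝ := (1 + (2:ℝ) ^ ε) / 2 with hq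
  have hq1 : 1 < q := by rw [hq]; linarith
  have hq2 : q < (2:ℝ) ^ ε := by rw [hq]; linarith
  set c' : ℝ := q * (2:ℝ) ^ (-s) with hc'
  have h2spos : (0:ℝ) < (2:ℝ) ^ (-s) := Real.rpow_pos_of_pos (by norm_num) _
  have hc'pos : 0 < c' := by rw [hc']; positivity
  have hc'lt : c' < (2:ℝ) ^ (-α) := by
    have : (2:ℝ) ^ ε * (2:ℝ) ^ (-s) = (2:ℝ) ^ (-α) := by
      rw [← Real.rpow_add (by norm_num : (0:ℝ) < 2)]; congr 1; rw [hs]; ring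
    calc c' = q * (2:ℝ) ^ (-s) := hc'
      _ < (2:ℝ) ^ ε * (2:ℝ) ^ (-s) := by
          exact mul_lt_mul_of_pos_right hq2 h2spos
      _ = (2:ℝ) ^ (-α) := this
  have hev2 : ∀ᶠ x in atTop, c' < G (2 * x) / G x :=
    (hrv 2 (by norm_num)).eventually (eventually_gt_nhds hc'lt)
  obtain ⟨x₀, hx₀⟩ := eventually_atTop.mp ((hevg.and hev2).and (eventually_ge_atTop (max b 1)))
  set x₁ : ℝ := max x₀ (max b 1) with hx₁def
  have hx₁prop : ∀ x, x₁ ≤ x → (g x ≠ ⊤ ∧ 0 < G x) ∧ c' < G (2*x) / G x := by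
    intro x hx
    exact (hx₀ x (le_trans (le_max_left _ _) hx)).1
  have hx₁1 : (1:ℝ) ≤ x₁ := le_trans (le_trans (le_max_right b 1) (le_max_right _ _)) le_rfl
  have hx₁0 : (0:ℝ) < x₁ := lt_of_lt_of_le one_pos hx₁1
  have hstepG : ∀ x, x₁ ≤ x → c' * G x ≤ G (2 * x) := by
    intro x hx
    obtain ⟨⟨_, hGpos⟩, hratio⟩ := hx₁prop x hx
    rw [lt_div_iff₀ hGpos] at hratio
    linarith
  have hantiG : ∀ x y, x₁ ≤ x → x ≤ y → G y ≤ G x := by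
    intro x y hx hxy
    obtain ⟨⟨hgfin, _⟩, _⟩ := hx₁prop x hx
    exact ENNReal.toReal_mono hgfin (measure_mono (Ioi_subset_Ioi hxy))
  have hF : Tendsto (fun x => x ^ s * G x) atTop atTop := by
    apply growth_lemma (fun x => x ^ s * G x) q c' hq1 hc'pos x₁ hx₁1
    · obtain ⟨⟨_, hGpos⟩, _⟩ := hx₁prop x₁ le_rfl
      have : (0:ℝ) < x₁ ^ s := Real.rpow_pos_of_pos hx₁0 _
      positivity
    · intro x hx
      have hx0 : (0:ℝ) < x := lt_of_lt_of_le hx₁0 hx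
      obtain ⟨⟨_, hGpos⟩, _⟩ := hx₁prop x hx
      have hstep := hstepG x hx
      have hmul : (2*x) ^ s = (2:ℝ) ^ s * x ^ s :=
        Real.mul_rpow (by norm_num) hx0.le
      have h2s : (2:ℝ) ^ s * c' = q := by
        rw [hc', ← mul_assoc, mul_comm ((2:ℝ)^s) q, mul_assoc, ← Real.rpow_add (by norm_num : (0:ℝ) < 2)]
        simp
      have hxs : (0:ℝ) ≤ x ^ s := Real.rpow_nonneg hx0.le _
      have h2spos' : (0:ℝ) < (2:ℝ) ^ s := Real.rpow_pos_of_pos (by norm_num) _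
      calc q * (x ^ s * G x) = ((2:ℝ) ^ s * c') * (x ^ s * G x) := by rw [h2s]
        _ = ((2:ℝ) ^ s * x ^ s) * (c' * G x) := by ring
        _ ≤ ((2:ℝ) ^ s * x ^ s) * G (2*x) := by
            apply mul_le_mul_of_nonneg_left hstep (by positivity)
        _ = (2*x) ^ s * G (2*x) := by rw [hmul]
    · intro x y hx hxy hy2
      have hx0 : (0:ℝ) < x := lt_of_lt_of_le hx₁0 hx
      obtain ⟨⟨_, hGpos⟩, _⟩ := hx₁prop x hx
      have hstep := hstepG x hx
      have hG2y : G (2*x) ≤ G y := hantiG y (2*x) (le_trans hx hxy) hy2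
      have hxs : x ^ s ≤ y ^ s := Real.rpow_le_rpow hx0.le hxy hs0.le
      have hGynn : (0:ℝ) ≤ G y := ENNReal.toReal_nonneg
      have hxspos : (0:ℝ) < x ^ s := Real.rpow_pos_of_pos hx0 _
      calc c' * (x ^ s * G x) = x ^ s * (c' * G x) := by ring
        _ ≤ x ^ s * G (2*x) := mul_le_mul_of_nonneg_left hstep hxspos.le
        _ ≤ x ^ s * G y := mul_le_mul_of_nonneg_left hG2y hxspos.le
        _ ≤ y ^ s * G y := mul_le_mul_of_nonneg_right hxs hGynn
  -- first bullet
  have hzero : Tendsto (fun x => (Gμ x - G x) / G x) atTop (𝓝 0) := by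
    apply squeeze_zero_norm' (a := fun x => (Mr * (1 + 2 * b ^ ε)) / (x ^ s * G x))
    · filter_upwards [hdiff, hevg, eventually_ge_atTop (1:ℝ)] with x hd hev hx1
      obtain ⟨hgfin, hGpos⟩ := hev
      have hx0 : (0:ℝ) < x := lt_of_lt_of_le one_pos hx1
      have hxspos : (0:ℝ) < x ^ s := Real.rpow_pos_of_pos hx0 _
      have hxneg : x ^ (-s) = (x ^ s)⁻¹ := Real.rpow_neg hx0.le _
      rw [Real.norm_eq_abs, abs_div, abs_of_pos hGpos]
      rw [div_le_div_iff₀ hGpos (by positivity)]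
      calc |Gμ x - G x| * (x ^ s * G x)
          ≤ ((Mr * (1 + 2 * b ^ ε)) * x ^ (-s)) * (x ^ s * G x) := by
            apply mul_le_mul_of_nonneg_right hd (by positivity)
        _ = (Mr * (1 + 2 * b ^ ε)) * ((x ^ s)⁻¹ * x ^ s) * G x := by rw [hxneg]; ring
        _ = Mr * (1 + 2 * b ^ ε) * G x := by
            rw [inv_mul_cancel₀ (ne_of_gt hxspos)]; ring
    · have := hF.inv_tendsto_atTop
      have h2 : Tendsto (fun x => (Mr * (1 + 2 * b ^ ε)) * (x ^ s * G x)⁻¹) atTop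
          (𝓝 ((Mr * (1 + 2 * b ^ ε)) * 0)) := this.const_mul _
      simp only [mul_zero] at h2
      apply h2.congr
      intro x
      rw [div_eq_mul_inv]
  have hfirst : Tendsto (fun x => Gμ x / G x) atTop (𝓝 1) := by
    have hone : Tendsto (fun x => 1 + (Gμ x - G x) / G x) atTop (𝓝 1) := by
      have := (tendsto_const_nhds : Tendsto (fun _ : ℝ => (1:ℝ)) atTop (𝓝 1)).add hzero
      simpa using this
    apply hone.congr'
    filter_upwards [hevg] with x hev
    obtain ⟨_, hGpos⟩ := hev
    field_simp
    ring
  refine ⟨hfirst, ?_, hthird⟩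
  -- second bullet
  intro t ht
  have htx : Tendsto (fun x : ℝ => t * x) atTop atTop :=
    (tendsto_id.const_mul_atTop ht)
  have h1' : Tendsto (fun x => Gμ (t*x) / G (t*x)) atTop (𝓝 1) := hfirst.comp htx
  have h2 : Tendsto (fun x => G (t*x) / G x) atTop (𝓝 (t ^ (-α))) := hrv t ht
  have h3 : Tendsto (fun x => G x / Gμ x) atTop (𝓝 1) := by
    have := hfirst.inv₀ one_ne_zero
    simp only [inv_one] at this
    apply this.congr
    intro x
    rw [inv_div]
  have hprod : Tendsto (fun x => (Gμ (t*x) / G (t*x)) * (G (t*x) / G x) * (G x / Gμ x))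
      atTop (𝓝 (t ^ (-α))) := by
    have := (h1'.mul h2).mul h3
    simpa using this
  apply hprod.congr'
  have hevμ : ∀ᶠ x in atTop, 0 < Gμ x := by
    have := hfirst.eventually (eventually_gt_nhds (by norm_num : (1:ℝ)/2 < 1))
    filter_upwards [this, hevg] with x hx hev
    obtain ⟨_, hGpos⟩ := hev
    have h0 : 0 < Gμ x / G x := lt_trans (by norm_num) hx
    rcases div_pos_iff.mp h0 with ⟨h,_⟩|⟨_,h⟩
    · exact h
    · linarith
  filter_upwards [hevg, htx.eventually hevg, hevμ] with x hev hevt hμpos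
  obtain ⟨_, hGpos⟩ := hev
  obtain ⟨_, hGtpos⟩ := hevt
  field_simp
  exact (mul_div_cancel_left₀ _ hμpos.ne').symm
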